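/- Let w_α = αβαβ⋯ ∈ ∂I be the strictly alternating infinite word beginning with α. For x ∈ I write x = x₀x₁ where x₁ is the longest alternating suffix of x ending with the letter β (x₁ = ε if no such suffix exists), and similarly y = y₀y₁. Then D_{w_α}(x, y) = (dim_q(x₀)/dim_q(y₀))·q^{|y₁| − |x₁|}. The analogous statement with the roles of α and β interchanged holds for w_β = βαβα⋯. -/

import Mathlib

open Filter Topology MeasureTheory

/-- Words in the free monoid on two letters `α = true`, `β = false`. -/
abbrev Word := List Bool

/-- Conjugation: reverse the word and swap the two letters. -/
def wconj (x : Word) : Word := x.reverse.map (fun b => !b)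

/-- Fusion multiplicity `m(z; x, y)`: the number of triples `(x₀, w, y₀)` with
`x = x₀w`, `y = w̄y₀` and `z = x₀y₀`. -/
def fm (x y z : Word) : ℕ :=
  ((Finset.range (x.length + 1)).filter (fun k =>
    wconj (x.drop k) <+: y ∧ z = x.take k ++ y.drop (x.length - k))).card

/-- Maximal alternating blocks of a word. -/
def blocks : Word → List Word
  | [] => []
  | a :: rest =>
    match blocks rest with
    | [] => [[a]]
    | b :: bs => if b.head? = some a then [a] :: b :: bs else (a :: b) :: bs

/-- The quantum integer `[n]_q = (qⁿ - q⁻ⁿ)/(q - q⁻¹)`. -/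
noncomputable def qnum (q : ℝ) (n : ℕ) : ℝ := (q ^ n - q⁻¹ ^ n) / (q - q⁻¹)

/-- Quantum dimension `dim_q(x) = ∏ᵢ [|xᵢ|+1]_q` over the maximal alternating blocks. -/
noncomputable def dimq (q : ℝ) (x : Word) : ℝ :=
  ((blocks x).map (fun b => qnum q (b.length + 1))).prod

/-- Classical dimension `dim₁(x) = ∏ᵢ (|xᵢ|+1)` over the maximal alternating blocks. -/
def dim1 (x : Word) : ℕ := ((blocks x).map (fun b => b.length + 1)).prod
/-- The word `[w]_n` formed by the first `n` letters of an infinite word `w ∈ ∂I`. -/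
def bprefix (w : ℕ → Bool) (n : ℕ) : Word := (List.range n).map w

/-- `D_w(x, y) = lim_n dim_q(x[w]_n)/dim_q(y[w]_n)` for `x, y ∈ I` and `w ∈ ∂I`. -/
noncomputable def Dw (q : ℝ) (x y : Word) (w : ℕ → Bool) : ℝ :=
  limUnder atTop (fun n => dimq q (x ++ bprefix w n) / dimq q (y ++ bprefix w n))

/-- Concatenation of a finite word with an infinite word. -/
def bcat (z : Word) (u : ℕ → Bool) : ℕ → Bool :=
  fun n => if n < z.length then z.getD n false else u (n - z.length)

/-- The strictly alternating infinite word starting with the letter `a`. -/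
def walt (a : Bool) : ℕ → Bool := fun n => if n % 2 = 0 then a else !a

/-- `(x|w)`: the length of the longest common prefix of a finite word `x` and an
infinite word `w`. -/
def cpb : Word → (ℕ → Bool) → ℕ
  | [], _ => 0
  | a :: xs, w => if a = w 0 then cpb xs (fun n => w (n + 1)) + 1 else 0

lemma blocks_cons_of_nil {t : Word} (h : blocks t = []) (a : Bool) :
    blocks (a :: t) = [[a]] := by
  show (match blocks t with
    | [] => [[a]]
    | b :: bs => if b.head? = some a then [a] :: b :: bs else (a :: b) :: bs) = [[a]]
  rw [h]

lemma blocks_cons_of_cons {t : Word} {b : Word} {bs : List Word}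
    (h : blocks t = b :: bs) (a : Bool) :
    blocks (a :: t) = if b.head? = some a then [a] :: b :: bs else (a :: b) :: bs := by
  show (match blocks t with
    | [] => [[a]]
    | b :: bs => if b.head? = some a then [a] :: b :: bs else (a :: b) :: bs) = _
  rw [h]

lemma blocks_ne_nil {z : Word} (hz : z ≠ []) : blocks z ≠ [] := by
  cases z with
  | nil => simp at hz
  | cons a t =>
    cases h : blocks t with
    | nil => rw [blocks_cons_of_nil h]; simp
    | cons b bs => rw [blocks_cons_of_cons h]; split <;> simp

lemma blocks_head : ∀ (c : Word), c ≠ [] →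
    ∃ b bs, blocks c = b :: bs ∧ b.head? = c.head?
  | [], h => absurd rfl h
  | a :: t, _ => by
    cases h : blocks t with
    | nil => exact ⟨[a], [], blocks_cons_of_nil h a, rfl⟩
    | cons b bs =>
      by_cases hb : b.head? = some a
      · exact ⟨[a], b :: bs, by rw [blocks_cons_of_cons h, if_pos hb], rfl⟩
      · exact ⟨a :: b, bs, by rw [blocks_cons_of_cons h, if_neg hb], rfl⟩

lemma blocks_append (c : Word) : ∀ z : Word, (z ≠ [] → z.getLast? = c.head?) →
    blocks (z ++ c) = blocks z ++ blocks c := by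
  intro z
  induction z with
  | nil => intro _; rfl
  | cons a z' ih =>
    intro h
    cases hz' : z' with
    | nil =>
      subst hz'
      have ha : c.head? = some a := (h (by simp)).symm
      cases c with
      | nil => simp at ha
      | cons h0 t =>
        obtain rfl : a = h0 := by simpa using ha.symm
        obtain ⟨b, bs, hb, hbh⟩ := blocks_head (a :: t) (by simp)
        show blocks (a :: a :: t) = blocks [a] ++ blocks (a :: t)
        rw [blocks_cons_of_cons hb a, if_pos (by simpa using hbh),
          blocks_cons_of_nil (t := ([] : Word)) rfl a, hb]
        rfl
    | cons a2 t2 =>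
      subst hz'
      have hz'' : (a2 :: t2).getLast? = c.head? := by
        have := h (by simp)
        rwa [List.getLast?_cons_cons] at this
      have IH := ih (fun _ => hz'')
      obtain ⟨b, bs, hb⟩ : ∃ b bs, blocks (a2 :: t2) = b :: bs := by
        cases hbb : blocks (a2 :: t2) with
        | nil => exact absurd hbb (blocks_ne_nil (by simp))
        | cons b bs => exact ⟨b, bs, rfl⟩
      have hbc : blocks ((a2 :: t2) ++ c) = b :: (bs ++ blocks c) := by
        rw [IH, hb]; rfl
      show blocks (a :: ((a2 :: t2) ++ c)) = blocks (a :: a2 :: t2) ++ blocks c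
      rw [blocks_cons_of_cons hbc a, blocks_cons_of_cons hb a]
      by_cases hba : b.head? = some a
      · rw [if_pos hba, if_pos hba]; rfl
      · rw [if_neg hba, if_neg hba]; rfl

lemma blocks_alt : ∀ c : Word, c ≠ [] → List.Chain' (· ≠ ·) c → blocks c = [c]
  | [], h, _ => absurd rfl h
  | [a], _, _ => rfl
  | a :: b :: t, _, h => by
    have IH := blocks_alt (b :: t) (by simp) h.tail
    have hab : a ≠ b := (List.isChain_cons_cons.mp h).1
    rw [blocks_cons_of_cons IH a, if_neg (by simpa using Ne.symm hab)]

section analytic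
variable {q : ℝ} (hq0 : 0 < q) (hq1 : q < 1)
include hq0 hq1

lemma qnum_pos (n : ℕ) : 0 < qnum q (n + 1) := by
  have h1 : (1:ℝ) < q⁻¹ := (one_lt_inv₀ hq0).mpr hq1
  have h2 : q ^ (n+1) < 1 := pow_lt_one₀ hq0.le hq1 (Nat.succ_ne_zero n)
  have h3 : (1:ℝ) < q⁻¹ ^ (n+1) := one_lt_pow₀ h1 (Nat.succ_ne_zero n)
  have h4 : q - q⁻¹ < 0 := by linarith
  have h5 : q ^ (n+1) - q⁻¹ ^ (n+1) < 0 := by linarith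
  exact div_pos_of_neg_of_neg h5 h4

lemma dimq_pos (x : Word) : 0 < dimq q x := by
  apply List.prod_pos
  intro r hr
  simp only [List.mem_map] at hr
  obtain ⟨b, _, rfl⟩ := hr
  exact qnum_pos hq0 hq1 _

lemma ratio_tendsto (k l : ℕ) :
    Tendsto (fun n : ℕ => qnum q (k + n + 1) / qnum q (l + n + 1)) atTop
      (𝓝 (q ^ ((l : ℤ) - (k : ℤ)))) := by
  have hq0' : (1:ℝ) < q⁻¹ := (one_lt_inv₀ hq0).mpr hq1
  have hqq : q - q⁻¹ ≠ 0 := by intro h; nlinarith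
  have hqsq0 : (0:ℝ) ≤ q ^ 2 := by positivity
  have hqsq1 : q ^ 2 < 1 := by nlinarith
  have key : ∀ n : ℕ, qnum q (k + n + 1) / qnum q (l + n + 1)
      = q ^ ((l : ℤ) - (k : ℤ)) * (((q^2) ^ (k+n+1) - 1) / ((q^2) ^ (l+n+1) - 1)) := by
    intro n
    have hA : q ^ (k+n+1) ≠ 0 := pow_ne_zero _ hq0.ne'
    have hBlt : q ^ (l+n+1) - q⁻¹ ^ (l+n+1) < 0 := by
      have h2 : q ^ (l+n+1) < 1 := pow_lt_one₀ hq0.le hq1 (by omega)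
      have h3 : (1:ℝ) < q⁻¹ ^ (l+n+1) := one_lt_pow₀ hq0' (by omega)
      linarith
    have hB : q ^ (l+n+1) - q⁻¹ ^ (l+n+1) ≠ 0 := hBlt.ne
    have hB2 : (q^2) ^ (l+n+1) - 1 ≠ 0 := by
      have : (q^2) ^ (l+n+1) < 1 := pow_lt_one₀ hqsq0 hqsq1 (by omega)
      linarith
    have hzq : q ^ ((l : ℤ) - (k : ℤ)) = q ^ (l+n+1) / q ^ (k+n+1) := by
      rw [← zpow_natCast q (l+n+1), ← zpow_natCast q (k+n+1), ← zpow_sub₀ hq0.ne']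
      congr 1
      push_cast
      ring
    have hden2 : q ^ (k+n+1) * ((q^2) ^ (l+n+1) - 1) ≠ 0 := mul_ne_zero hA hB2
    rw [qnum, qnum, div_div_div_comm, div_self hqq, div_one, hzq,
      div_mul_div_comm, div_eq_div_iff hB hden2, inv_pow, inv_pow,
      pow_right_comm q 2 (k+n+1), pow_right_comm q 2 (l+n+1)]
    have e1 : (q ^ (k+n+1))⁻¹ * q ^ (k+n+1) = 1 := inv_mul_cancel₀ hA
    have e2 : q ^ (l+n+1) * (q ^ (l+n+1))⁻¹ = 1 :=
      mul_inv_cancel₀ (pow_ne_zero _ hq0.ne')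
    linear_combination (1 - (q ^ (l+n+1))^2) * e1 + ((q ^ (k+n+1))^2 - 1) * e2
  have hmono : Tendsto (fun n : ℕ => n + 1) atTop atTop :=
    tendsto_atTop_mono (fun n => by simp only [id_eq]; omega) tendsto_id
  have t0 : Tendsto (fun n : ℕ => (q^2) ^ n) atTop (𝓝 0) :=
    tendsto_pow_atTop_nhds_zero_of_lt_one hqsq0 hqsq1
  have tk : Tendsto (fun n : ℕ => (q^2) ^ (k+n+1)) atTop (𝓝 0) :=
    t0.comp (tendsto_atTop_mono (fun n => by simp only [id_eq]; omega) tendsto_id)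
  have tl : Tendsto (fun n : ℕ => (q^2) ^ (l+n+1)) atTop (𝓝 0) :=
    t0.comp (tendsto_atTop_mono (fun n => by simp only [id_eq]; omega) tendsto_id)
  have hdiv : Tendsto (fun n : ℕ => ((q^2) ^ (k+n+1) - 1) / ((q^2) ^ (l+n+1) - 1))
      atTop (𝓝 (((0:ℝ) - 1) / ((0:ℝ) - 1))) :=
    (tk.sub_const 1).div (tl.sub_const 1) (by norm_num)
  have := hdiv.const_mul (q ^ ((l : ℤ) - (k : ℤ)))
  norm_num at this
  exact Tendsto.congr (fun n => (key n).symm) this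

end analytic

lemma bprefix_length (w : ℕ → Bool) (n : ℕ) : (bprefix w n).length = n := by
  simp [bprefix]

lemma bprefix_ne_nil (w : ℕ → Bool) {n : ℕ} (hn : 1 ≤ n) : bprefix w n ≠ [] := by
  intro h
  have := bprefix_length w n
  rw [h] at this
  simp at this
  omega

lemma bprefix_head (w : ℕ → Bool) {n : ℕ} (hn : 1 ≤ n) :
    (bprefix w n).head? = some (w 0) := by
  obtain ⟨m, rfl⟩ : ∃ m, n = m + 1 := ⟨n - 1, by omega⟩
  rw [bprefix, List.range_succ_eq_map]
  simp

lemma walt_zero (a : Bool) : walt a 0 = a := rfl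

lemma walt_chain' (a : Bool) (n : ℕ) : List.Chain' (· ≠ ·) (bprefix (walt a) n) := by
  rw [bprefix, List.Chain', List.isChain_map]
  cases n with
  | zero => simp
  | succ m =>
    rw [List.isChain_range_succ]
    intro i _
    unfold walt
    rcases Nat.mod_two_eq_zero_or_one i with h | h
    · have h2 : (i+1) % 2 = 1 := by omega
      simp [h, h2]
    · have h2 : (i+1) % 2 = 0 := by omega
      simp [h, h2]

lemma walt_getLast (a : Bool) {x₁ : Word} (hx : x₁ ≠ []) (h : x₁.getLast? = some (!a)) (n : ℕ) :
    List.Chain' (· ≠ ·) x₁ → List.Chain' (· ≠ ·) (x₁ ++ bprefix (walt a) n) := by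
  intro hc
  apply hc.append (walt_chain' a n)
  intro x hx' y hy'
  cases n with
  | zero => simp [bprefix] at hy'
  | succ m =>
    rw [bprefix_head _ (by omega), walt_zero] at hy'
    rw [h] at hx'
    simp at hx' hy'
    subst hx'; subst hy'
    simp

lemma dimq_append_alt (q : ℝ) (z c : Word) (hc : c ≠ [])
    (hcc : List.Chain' (· ≠ ·) c) (h : z ≠ [] → z.getLast? = c.head?) :
    dimq q (z ++ c) = dimq q z * qnum q (c.length + 1) := by
  unfold dimq
  rw [blocks_append c z h, blocks_alt c hc hcc, List.map_append, List.prod_append]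
  simp

lemma struct (q : ℝ) (a : Bool) (x₀ x₁ : Word)
    (h1 : List.Chain' (· ≠ ·) x₁) (h2 : x₁ ≠ [] → x₁.getLast? = some (!a))
    (h3 : ∀ s : Word, s <:+ (x₀ ++ x₁) → List.Chain' (· ≠ ·) s →
        s.getLast? = some (!a) → s.length ≤ x₁.length)
    {n : ℕ} (hn : 1 ≤ n) :
    dimq q ((x₀ ++ x₁) ++ bprefix (walt a) n)
      = dimq q x₀ * qnum q (x₁.length + n + 1) := by
  have hassoc : (x₀ ++ x₁) ++ bprefix (walt a) n = x₀ ++ (x₁ ++ bprefix (walt a) n) :=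
    List.append_assoc _ _ _
  have hcne : x₁ ++ bprefix (walt a) n ≠ [] := by
    intro h
    exact bprefix_ne_nil (walt a) hn (List.append_eq_nil_iff.mp h).2
  have hcc : List.Chain' (· ≠ ·) (x₁ ++ bprefix (walt a) n) := by
    rcases eq_or_ne x₁ [] with hx1 | hx1
    · rw [hx1]; simpa using walt_chain' a n
    · exact walt_getLast a hx1 (h2 hx1) n h1
  have hlast : x₀ ≠ [] → x₀.getLast? = (x₁ ++ bprefix (walt a) n).head? := by
    intro hx0
    have hx0' : x₀.dropLast ++ [x₀.getLast hx0] = x₀ := List.dropLast_append_getLast hx0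
    rw [List.getLast?_eq_getLast hx0]
    rcases eq_or_ne x₁ [] with hx1 | hx1
    · rw [hx1, List.nil_append, bprefix_head _ hn, walt_zero]
      congr 1
      by_contra hne
      have hbna : x₀.getLast hx0 = !a := by
        cases hgl : x₀.getLast hx0 <;> cases a <;> simp_all
      have hsuf : [x₀.getLast hx0] <:+ x₀ ++ x₁ := by
        rw [hx1, List.append_nil]
        exact ⟨x₀.dropLast, hx0'⟩
      have hlen := h3 _ hsuf (List.isChain_singleton _) (by simp [hbna])
      rw [hx1] at hlen
      simp only [List.length_cons, List.length_nil] at hlen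
      omega
    · obtain ⟨h₁, t₁, rfl⟩ : ∃ h₁ t₁, x₁ = h₁ :: t₁ := by
        cases x₁ with
        | nil => exact absurd rfl hx1
        | cons h₁ t₁ => exact ⟨h₁, t₁, rfl⟩
      rw [List.cons_append, List.head?_cons]
      congr 1
      by_contra hne
      have hsuf : (x₀.getLast hx0 :: h₁ :: t₁) <:+ x₀ ++ (h₁ :: t₁) := by
        refine ⟨x₀.dropLast, ?_⟩
        rw [show x₀.getLast hx0 :: h₁ :: t₁ = [x₀.getLast hx0] ++ (h₁ :: t₁) from rfl,
          ← List.append_assoc, hx0']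
      have hchain : List.Chain' (· ≠ ·) (x₀.getLast hx0 :: h₁ :: t₁) :=
        List.isChain_cons_cons.mpr ⟨hne, h1⟩
      have hlast2 : (x₀.getLast hx0 :: h₁ :: t₁).getLast? = some (!a) := by
        rw [List.getLast?_cons_cons]; exact h2 (by simp)
      have hlen := h3 _ hsuf hchain hlast2
      simp only [List.length_cons] at hlen
      omega
  rw [hassoc, dimq_append_alt q x₀ _ hcne hcc hlast]
  congr 2
  simp [bprefix_length]

lemma Dw_alt (q : ℝ) (hq0 : 0 < q) (hq1 : q < 1) (a : Bool) (x₀ x₁ y₀ y₁ : Word)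
    (hx1 : List.Chain' (· ≠ ·) x₁) (hx2 : x₁ ≠ [] → x₁.getLast? = some (!a))
    (hx3 : ∀ s : Word, s <:+ (x₀ ++ x₁) → List.Chain' (· ≠ ·) s →
        s.getLast? = some (!a) → s.length ≤ x₁.length)
    (hy1 : List.Chain' (· ≠ ·) y₁) (hy2 : y₁ ≠ [] → y₁.getLast? = some (!a))
    (hy3 : ∀ s : Word, s <:+ (y₀ ++ y₁) → List.Chain' (· ≠ ·) s →
        s.getLast? = some (!a) → s.length ≤ y₁.length) :
    Dw q (x₀ ++ x₁) (y₀ ++ y₁) (walt a) =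
      (dimq q x₀ / dimq q y₀) * q ^ ((y₁.length : ℤ) - (x₁.length : ℤ)) := by
  have hlim := (ratio_tendsto hq0 hq1 x₁.length y₁.length).const_mul
    (dimq q x₀ / dimq q y₀)
  unfold Dw
  apply Tendsto.limUnder_eq
  apply Tendsto.congr' ?_ hlim
  filter_upwards [eventually_ge_atTop 1] with n hn
  rw [struct q a x₀ x₁ hx1 hx2 hx3 hn, struct q a y₀ y₁ hy1 hy2 hy3 hn,
    mul_div_mul_comm]


/-- Write `x = x₀x₁` with `x₁` the longest alternating suffix of `x`
ending with `β` (`x₁ = ε` if none exists), and similarly `y = y₀y₁`.  Then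
`D_{w_α}(x, y) = (dim_q(x₀)/dim_q(y₀))·q^{|y₁| - |x₁|}` for the strictly alternating
word `w_α = αβαβ⋯`, and the analogous statement (with the roles of `α = true` and
`β = false` interchanged) holds for `w_β = βαβα⋯`. -/
theorem Dw_at_alternating_word (q : ℝ) (hq0 : 0 < q) (hq1 : q < 1) :
    (∀ x₀ x₁ y₀ y₁ : Word,
      List.Chain' (· ≠ ·) x₁ → (x₁ ≠ [] → x₁.getLast? = some false) →
      (∀ s : Word, s <:+ (x₀ ++ x₁) → List.Chain' (· ≠ ·) s →
        s.getLast? = some false → s.length ≤ x₁.length) →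
      List.Chain' (· ≠ ·) y₁ → (y₁ ≠ [] → y₁.getLast? = some false) →
      (∀ s : Word, s <:+ (y₀ ++ y₁) → List.Chain' (· ≠ ·) s →
        s.getLast? = some false → s.length ≤ y₁.length) →
      Dw q (x₀ ++ x₁) (y₀ ++ y₁) (walt true) =
        (dimq q x₀ / dimq q y₀) * q ^ ((y₁.length : ℤ) - (x₁.length : ℤ))) ∧
    (∀ x₀ x₁ y₀ y₁ : Word,
      List.Chain' (· ≠ ·) x₁ → (x₁ ≠ [] → x₁.getLast? = some true) →
      (∀ s : Word, s <:+ (x₀ ++ x₁) → List.Chain' (· ≠ ·) s →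
        s.getLast? = some true → s.length ≤ x₁.length) →
      List.Chain' (· ≠ ·) y₁ → (y₁ ≠ [] → y₁.getLast? = some true) →
      (∀ s : Word, s <:+ (y₀ ++ y₁) → List.Chain' (· ≠ ·) s →
        s.getLast? = some true → s.length ≤ y₁.length) →
      Dw q (x₀ ++ x₁) (y₀ ++ y₁) (walt false) =
        (dimq q x₀ / dimq q y₀) * q ^ ((y₁.length : ℤ) - (x₁.length : ℤ))) := by
  constructor
  · intro x₀ x₁ y₀ y₁ hx1 hx2 hx3 hy1 hy2 hy3
    exact Dw_alt q hq0 hq1 true x₀ x₁ y₀ y₁ hx1 hx2 hx3 hy1 hy2 hy3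
  · intro x₀ x₁ y₀ y₁ hx1 hx2 hx3 hy1 hy2 hy3
    exact Dw_alt q hq0 hq1 false x₀ x₁ y₀ y₁ hx1 hx2 hx3 hy1 hy2 hy3
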